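/- Let A_0, A_{−1}, …, A_{−n+1} be i.i.d. random d×d matrices with nonnegative entries a.s., let 0 < ε ≤ 1, assume E[A_{ij}^ε] < ∞ for all i, j, and set Π_n = A_0 A_{−1} ⋯ A_{−n+1}. Then E[‖Π_n‖₁^ε] ≤ ‖(E[A^(ε)])^n‖₁, where ‖M‖₁ = Σ_{i,j} |M_{ij}|, A^(ε) is the matrix A with each entry raised to the power ε, E[A^(ε)] is its entrywise expectation, and the n-th power on the right-hand side is taken in the sense of matrix multiplication. -/

import Mathlib

open MeasureTheory ProbabilityTheory Filter Matrix Set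
open scoped ENNReal Topology

namespace TriSRE

variable {Ω : Type*} [MeasurableSpace Ω]

/-- Condition (T) of Matsui–Świątkowski for a random matrix `A` and random vector `B`,
with tail indices `α`. -/
structure CondT {d : ℕ} (μ : Measure Ω)
    (A : Ω → Matrix (Fin d) (Fin d) ℝ) (B : Ω → Fin d → ℝ) (α : Fin d → ℝ) : Prop where
  measA : ∀ i j, Measurable fun ω => A ω i j
  measB : ∀ i, Measurable fun ω => B ω i
  /-- (T-1) nonnegative entries -/
  nonnegA : ∀ i j, ∀ᵐ ω ∂μ, 0 ≤ A ω i j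
  nonnegB : ∀ i, ∀ᵐ ω ∂μ, 0 ≤ B ω i
  /-- (T-2) -/
  B_ne_zero : ∀ i, μ {ω | B ω i = 0} < 1
  /-- (T-3) upper triangular -/
  upperTriangular : ∀ i j, j < i → ∀ᵐ ω ∂μ, A ω i j = 0
  /-- (T-4) -/
  alpha_pos : ∀ i, 0 < α i
  alpha_injective : ∀ i j, i ≠ j → α i ≠ α j
  diag_moment_one : ∀ i, ∫ ω, A ω i i ^ α i ∂μ = 1
  /-- (T-5) -/
  A_moment : ∀ i j, Integrable (fun ω => A ω i j ^ α i) μ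
  /-- (T-6) -/
  B_moment : ∀ i, Integrable (fun ω => B ω i ^ α i) μ
  /-- (T-7) -/
  log_moment : ∀ i, Integrable (fun ω => A ω i i ^ α i * max (Real.log (A ω i i)) 0) μ
  /-- (T-8) the conditional law of `log A i i` on `{A i i > 0}` is non-arithmetic,
  i.e. not concentrated on any lattice `c ℤ`. -/
  nonarithmetic : ∀ i, ∀ c : ℝ,
    μ {ω | 0 < A ω i i ∧ ∀ k : ℤ, Real.log (A ω i i) ≠ c * k} ≠ 0

/-- `i ⪯ j` : `i` directly depends on `j` (the entry `A i j` is positive with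
positive probability). -/
def DirectDep {d : ℕ} (μ : Measure Ω) (A : Ω → Matrix (Fin d) (Fin d) ℝ)
    (i j : Fin d) : Prop :=
  0 < μ {ω | 0 < A ω i j}

/-- `i ⊴ j` : `i` depends on `j` (a chain of direct dependencies from `i` to `j`). -/
def Dep {d : ℕ} (μ : Measure Ω) (A : Ω → Matrix (Fin d) (Fin d) ℝ) :
    Fin d → Fin d → Prop :=
  Relation.ReflTransGen (DirectDep μ A)

/-- the modified tail index `α̃ i = min {α j : i ⊴ j}`. -/
noncomputable def tildeAlpha {d : ℕ} (μ : Measure Ω) (A : Ω → Matrix (Fin d) (Fin d) ℝ)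
    (α : Fin d → ℝ) (i : Fin d) : ℝ :=
  sInf {a : ℝ | ∃ j, Dep μ A i j ∧ a = α j}

variable {d : ℕ}

/-- `PiProd A t n = A_t · A_{t-1} ⋯ A_{t-n+1}` (the product `Π_{t, t-n+1}` of `n` factors);
in particular `PiProd A 0 n = Π_n`. -/
noncomputable def PiProd (A : ℤ → Ω → Matrix (Fin d) (Fin d) ℝ) (t : ℤ) :
    ℕ → Ω → Matrix (Fin d) (Fin d) ℝ
  | 0 => fun _ => 1
  | n + 1 => fun ω => PiProd A t n ω * A (t - n) ω

/-- `diagProd A i t n = A_{ii,t} · A_{ii,t-1} ⋯ A_{ii,t-n+1}` (the diagonal product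
`Π^{(i)}_{t,t-n+1}`); in particular `diagProd A i 0 n = Π^{(i)}_n`. -/
noncomputable def diagProd (A : ℤ → Ω → Matrix (Fin d) (Fin d) ℝ) (i : Fin d) (t : ℤ) :
    ℕ → Ω → ℝ
  | 0 => fun _ => 1
  | n + 1 => fun ω => diagProd A i t n ω * A (t - n) ω i i

/-- The stationary solution process `W_t = Σ_{n=0}^∞ Π_{t,t+1-n} B_{t-n}`. -/
noncomputable def Wproc (A : ℤ → Ω → Matrix (Fin d) (Fin d) ℝ) (B : ℤ → Ω → Fin d → ℝ)
    (t : ℤ) (ω : Ω) : Fin d → ℝ :=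
  ∑' n : ℕ, PiProd A t n ω *ᵥ B (t - n) ω

/-- `(A_t, B_t)_{t ∈ ℤ}` is an i.i.d. sequence (with generic element `(A 0, B 0)`). -/
def IIDCopies (μ : Measure Ω) (A : ℤ → Ω → Matrix (Fin d) (Fin d) ℝ)
    (B : ℤ → Ω → Fin d → ℝ) : Prop :=
  (∀ t i j, Measurable fun ω => A t ω i j) ∧ (∀ t i, Measurable fun ω => B t ω i) ∧
  iIndepFun
    (fun t ω => (Matrix.of.symm (A t ω), B t ω)) μ ∧
  ∀ t : ℤ, μ.map (fun ω => (Matrix.of.symm (A t ω), B t ω))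
    = μ.map (fun ω => (Matrix.of.symm (A 0 ω), B 0 ω))

open scoped Classical in
/-- `D_{i,t} = Σ_{j : j ≻ i} A_{ij,t} W_{j,t-1} + B_{i,t}`. -/
noncomputable def Dterm (μ : Measure Ω) (A : ℤ → Ω → Matrix (Fin d) (Fin d) ℝ)
    (B : ℤ → Ω → Fin d → ℝ) (i : Fin d) (t : ℤ) (ω : Ω) : ℝ :=
  (∑ j ∈ Finset.univ.filter fun j => DirectDep μ (A 0) i j ∧ i ≠ j,
      A t ω i j * Wproc A B (t - 1) ω j) + B t ω i

/-- `A⁰_t` : the matrix `A_t` with the diagonal replaced by zeros. -/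
noncomputable def Azero (A : ℤ → Ω → Matrix (Fin d) (Fin d) ℝ) (t : ℤ) (ω : Ω) :
    Matrix (Fin d) (Fin d) ℝ :=
  Matrix.of fun i j => if i = j then 0 else A t ω i j

/-- The matrix of the `π'_{ij}(t, t-m+1)` (`m ≥ 1` factors): `A⁰_t · Π_{t-1, t-m+1}`. -/
noncomputable def piPrime (A : ℤ → Ω → Matrix (Fin d) (Fin d) ℝ) (t : ℤ) (m : ℕ)
    (ω : Ω) : Matrix (Fin d) (Fin d) ℝ :=
  Azero A t ω * PiProd A (t - 1) (m - 1) ω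

/-- The expectation of a real random variable with values in `EReal`
(`E f = ∫⁻ f⁺ − ∫⁻ f⁻`); it equals `−∞` when the negative part is not integrable
(and the positive part is). -/
noncomputable def emean (μ : Measure Ω) (f : Ω → ℝ) : EReal :=
  ((∫⁻ ω, ENNReal.ofReal (f ω) ∂μ : ℝ≥0∞) : EReal)
    - ((∫⁻ ω, ENNReal.ofReal (-f ω) ∂μ : ℝ≥0∞) : EReal)

/-- The entrywise matrix norm `‖M‖₁ = Σ_{i,j} |M i j|`. -/
noncomputable def entryNorm (M : Matrix (Fin d) (Fin d) ℝ) : ℝ :=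
  ∑ i, ∑ j, |M i j|

/-- The top Lyapunov exponent `γ_A = inf_{n ≥ 1} (1/n) E[log ‖Π_n‖₁]`, as an extended
real number. -/
noncomputable def lyapunov (μ : Measure Ω) (A : ℤ → Ω → Matrix (Fin d) (Fin d) ℝ) :
    EReal :=
  ⨅ n : ℕ, ((((n : ℝ) + 1)⁻¹ : ℝ) : EReal)
    * emean μ fun ω => Real.log (entryNorm (PiProd A 0 (n + 1) ω))

/-- `(A_t)_{t ∈ ℤ}` is an i.i.d. sequence of random matrices
(with generic element `A 0`). -/
def IIDMat (μ : Measure Ω) (A : ℤ → Ω → Matrix (Fin d) (Fin d) ℝ) : Prop :=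
  (∀ t i j, Measurable fun ω => A t ω i j) ∧
  iIndepFun (fun t ω => Matrix.of.symm (A t ω)) μ ∧
  ∀ t : ℤ, μ.map (fun ω => Matrix.of.symm (A t ω))
    = μ.map (fun ω => Matrix.of.symm (A 0 ω))

/-- The spectral radius of a real matrix: the largest modulus of its complex
eigenvalues. -/
noncomputable def specRad (M : Matrix (Fin d) (Fin d) ℝ) : ℝ≥0∞ :=
  spectralRadius ℂ (M.map (Complex.ofReal))


section AuxStmt17

private lemma rpow_sum_le_sum_rpow {ι : Type*} (s : Finset ι) (f : ι → ℝ≥0∞) {p : ℝ}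
    (hp0 : 0 < p) (hp1 : p ≤ 1) : (∑ i ∈ s, f i) ^ p ≤ ∑ i ∈ s, f i ^ p := by
  classical
  induction s using Finset.induction_on with
  | empty => simp [ENNReal.zero_rpow_of_pos hp0]
  | insert _ _ ha ih =>
    rw [Finset.sum_insert ha, Finset.sum_insert ha]
    exact (ENNReal.rpow_add_le_add_rpow _ _ hp0.le hp1).trans (add_le_add le_rfl ih)

private noncomputable def prodFun (g : ℤ → Matrix (Fin d) (Fin d) ℝ) (t : ℤ) :
    ℕ → Matrix (Fin d) (Fin d) ℝ
  | 0 => 1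
  | n + 1 => prodFun g t n * g (t - n)

private lemma piProd_eq_prodFun (A : ℤ → Ω → Matrix (Fin d) (Fin d) ℝ)
    (t : ℤ) (n : ℕ) (ω : Ω) :
    PiProd A t n ω = prodFun (fun s => A s ω) t n := by
  induction n with
  | zero => rfl
  | succ n ih => simp only [PiProd, prodFun, ih]

private lemma prodFun_congr {g₁ g₂ : ℤ → Matrix (Fin d) (Fin d) ℝ} (t : ℤ) (n : ℕ)
    (h : ∀ m : ℕ, m < n → g₁ (t - m) = g₂ (t - m)) : prodFun g₁ t n = prodFun g₂ t n := by
  induction n with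
  | zero => rfl
  | succ n ih =>
    simp only [prodFun]
    rw [ih fun m hm => h m (hm.trans (Nat.lt_succ_self n)), h n (Nat.lt_succ_self n)]

private lemma measurable_prodFun_entry {γ : Type*} [MeasurableSpace γ]
    (G : γ → ℤ → Matrix (Fin d) (Fin d) ℝ) (hG : ∀ s a b, Measurable fun v => G v s a b)
    (t : ℤ) (n : ℕ) (i j : Fin d) : Measurable fun v => prodFun (G v) t n i j := by
  induction n generalizing i j with
  | zero => exact measurable_const
  | succ n ih =>
    simp only [prodFun, Matrix.mul_apply]
    exact Finset.measurable_sum _ fun l _ => (ih i l).mul (hG _ l j)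

private lemma measurable_piProd_entry (A : ℤ → Ω → Matrix (Fin d) (Fin d) ℝ)
    (hA : ∀ t i j, Measurable fun ω => A t ω i j) (t : ℤ) (n : ℕ) (i j : Fin d) :
    Measurable fun ω => PiProd A t n ω i j := by
  induction n generalizing i j with
  | zero => exact measurable_const
  | succ n ih =>
    simp only [PiProd, Matrix.mul_apply]
    exact Finset.measurable_sum _ fun l _ => (ih i l).mul (hA _ l j)

private lemma piProd_nonneg {μ : Measure Ω} (A : ℤ → Ω → Matrix (Fin d) (Fin d) ℝ)
    (hA : ∀ t i j, ∀ᵐ ω ∂μ, 0 ≤ A t ω i j) (t : ℤ) (n : ℕ) :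
    ∀ᵐ ω ∂μ, ∀ i j, 0 ≤ PiProd A t n ω i j := by
  induction n with
  | zero =>
    filter_upwards with ω i j
    simp only [PiProd, Matrix.one_apply]
    split_ifs <;> norm_num
  | succ n ih =>
    have hAn : ∀ᵐ ω ∂μ, ∀ a b, 0 ≤ A (t - n) ω a b :=
      ae_all_iff.2 fun a => ae_all_iff.2 fun b => hA _ a b
    filter_upwards [ih, hAn] with ω h1 h2 i j
    simp only [PiProd, Matrix.mul_apply]
    exact Finset.sum_nonneg fun l _ => mul_nonneg (h1 i l) (h2 l j)

private lemma indep_piProd_A {μ : Measure Ω} (A : ℤ → Ω → Matrix (Fin d) (Fin d) ℝ)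
    (hiid : IIDMat μ A) (ε : ℝ) (n : ℕ) (i j k l : Fin d) :
    IndepFun (fun ω => ENNReal.ofReal (PiProd A 0 n ω i j) ^ ε)
      (fun ω => ENNReal.ofReal (A (0 - n) ω k l) ^ ε) μ := by
  classical
  set f : ℤ → Ω → (Fin d → Fin d → ℝ) := fun t ω => Matrix.of.symm (A t ω) with hf
  have hfm : ∀ t, Measurable (f t) := fun t =>
    measurable_pi_lambda _ fun a => measurable_pi_lambda _ fun b => hiid.1 t a b
  set S : Finset ℤ := (Finset.range n).image (fun m : ℕ => (0 - (m : ℤ))) with hS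
  set T : Finset ℤ := {(0 - (n : ℤ))} with hT
  have hST : Disjoint S T := by
    rw [Finset.disjoint_singleton_right, hS]
    simp only [Finset.mem_image, Finset.mem_range, not_exists]
    intro m hm
    omega
  have base := hiid.2.1.indepFun_finset S T hST hfm
  set G : (∀ _ : S, Fin d → Fin d → ℝ) → ℤ → Matrix (Fin d) (Fin d) ℝ :=
    fun v s => if h : s ∈ S then Matrix.of (v ⟨s, h⟩) else 0 with hG
  have hGm : ∀ s a b, Measurable fun v => G v s a b := by
    intro s a b
    by_cases h : s ∈ S
    · simp only [hG, dif_pos h]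
      exact (measurable_pi_apply b).comp
        ((measurable_pi_apply a).comp (measurable_pi_apply (⟨s, h⟩ : S)))
    · simp only [hG, dif_neg h]
      exact measurable_const
  set φ : (∀ _ : S, Fin d → Fin d → ℝ) → ℝ≥0∞ :=
    fun v => ENNReal.ofReal (prodFun (G v) 0 n i j) ^ ε with hφdef
  have hφ : Measurable φ :=
    (ENNReal.measurable_ofReal.comp (measurable_prodFun_entry G hGm 0 n i j)).pow_const ε
  set ψ : (∀ _ : T, Fin d → Fin d → ℝ) → ℝ≥0∞ :=
    fun v => ENNReal.ofReal (v ⟨0 - (n : ℤ), Finset.mem_singleton_self _⟩ k l) ^ ε with hψdef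
  have hψ : Measurable ψ := by
    apply Measurable.pow_const
    exact ENNReal.measurable_ofReal.comp ((measurable_pi_apply l).comp
      ((measurable_pi_apply k).comp (measurable_pi_apply _)))
  have heqφ : (fun ω => ENNReal.ofReal (PiProd A 0 n ω i j) ^ ε)
      = φ ∘ (fun ω (s : S) => f s ω) := by
    funext ω
    simp only [Function.comp_apply, hφdef]
    congr 2
    rw [piProd_eq_prodFun]
    have hcong : prodFun (fun s => A s ω) 0 n = prodFun (G fun s : S => f s ω) 0 n := by
      refine prodFun_congr 0 n fun m hm => ?_
      have hmem : (0 - (m : ℤ)) ∈ S := Finset.mem_image.2 ⟨m, Finset.mem_range.2 hm, rfl⟩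
      simp only [hG, dif_pos hmem]
      rfl
    rw [hcong]
  have heqψ : (fun ω => ENNReal.ofReal (A (0 - n) ω k l) ^ ε)
      = ψ ∘ (fun ω (s : T) => f s ω) := rfl
  rw [heqφ, heqψ]
  exact base.comp hφ hψ

/-- `E[‖Π_n‖₁^ε] ≤ ‖(E[A^(ε)])^n‖₁` for i.i.d. nonnegative random matrices
and `0 < ε ≤ 1`. -/
theorem moment_of_product_le_power_of_mean
    (μ : Measure Ω) [IsProbabilityMeasure μ] (hd : 1 ≤ d)
    (A : ℤ → Ω → Matrix (Fin d) (Fin d) ℝ)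
    (hiid : IIDMat μ A)
    (hA_nonneg : ∀ t : ℤ, ∀ i j, ∀ᵐ ω ∂μ, 0 ≤ A t ω i j)
    (ε : ℝ) (hε₀ : 0 < ε) (hε₁ : ε ≤ 1)
    (hmom : ∀ i j, Integrable (fun ω => A 0 ω i j ^ ε) μ)
    (n : ℕ) :
    ∫⁻ ω, ENNReal.ofReal (entryNorm (PiProd A 0 n ω) ^ ε) ∂μ
      ≤ ENNReal.ofReal
          (entryNorm ((Matrix.of fun i j => ∫ ω, A 0 ω i j ^ ε ∂μ) ^ n)) := by
  classical
  set Meps : Matrix (Fin d) (Fin d) ℝ := Matrix.of fun i j => ∫ ω, A 0 ω i j ^ ε ∂μ with hMeps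
  have hMeps_nonneg : ∀ i j, 0 ≤ Meps i j := fun i j =>
    integral_nonneg_of_ae ((hA_nonneg 0 i j).mono fun ω h => Real.rpow_nonneg h ε)
  have hpow_nonneg : ∀ m i j, 0 ≤ (Meps ^ m) i j := by
    intro m
    induction m with
    | zero =>
      intro i j
      rw [pow_zero, Matrix.one_apply]
      split_ifs <;> norm_num
    | succ m ih =>
      intro i j
      rw [pow_succ, Matrix.mul_apply]
      exact Finset.sum_nonneg fun l _ => mul_nonneg (ih i l) (hMeps_nonneg l j)
  have hmeas : ∀ (t : ℤ) (m : ℕ) (i j : Fin d),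
      Measurable fun ω => ENNReal.ofReal (PiProd A t m ω i j) ^ ε := fun t m i j =>
    (ENNReal.measurable_ofReal.comp (measurable_piProd_entry A hiid.1 t m i j)).pow_const ε
  -- the lintegral of an entry of A t raised to ε equals the corresponding entry of Meps
  have hAfac : ∀ (t : ℤ) (k l : Fin d),
      ∫⁻ ω, ENNReal.ofReal (A t ω k l) ^ ε ∂μ = ENNReal.ofReal (Meps k l) := by
    intro t k l
    have hfm : ∀ s : ℤ, Measurable fun ω => Matrix.of.symm (A s ω) := fun s =>
      measurable_pi_lambda _ fun a => measurable_pi_lambda _ fun b => hiid.1 s a b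
    have hh : Measurable fun m : Fin d → Fin d → ℝ => ENNReal.ofReal (m k l) ^ ε := by
      apply Measurable.pow_const
      exact ENNReal.measurable_ofReal.comp
        ((measurable_pi_apply l).comp (measurable_pi_apply k))
    have hmap : ∫⁻ ω, ENNReal.ofReal (A t ω k l) ^ ε ∂μ
        = ∫⁻ ω, ENNReal.ofReal (A 0 ω k l) ^ ε ∂μ := by
      calc ∫⁻ ω, ENNReal.ofReal (A t ω k l) ^ ε ∂μ
          = ∫⁻ m, ENNReal.ofReal (m k l) ^ ε
              ∂(μ.map fun ω => Matrix.of.symm (A t ω)) := (lintegral_map hh (hfm t)).symm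
        _ = ∫⁻ m, ENNReal.ofReal (m k l) ^ ε
              ∂(μ.map fun ω => Matrix.of.symm (A 0 ω)) := by rw [hiid.2.2 t]
        _ = ∫⁻ ω, ENNReal.ofReal (A 0 ω k l) ^ ε ∂μ := lintegral_map hh (hfm 0)
    rw [hmap]
    have : ENNReal.ofReal (Meps k l) = ∫⁻ ω, ENNReal.ofReal (A 0 ω k l ^ ε) ∂μ :=
      ofReal_integral_eq_lintegral_ofReal (hmom k l)
        ((hA_nonneg 0 k l).mono fun ω h => Real.rpow_nonneg h ε)
    rw [this]
    apply lintegral_congr_ae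
    filter_upwards [hA_nonneg 0 k l] with ω h
    rw [ENNReal.ofReal_rpow_of_nonneg h hε₀.le]
  -- key entrywise estimate by induction
  have key : ∀ m : ℕ, ∀ i j : Fin d,
      ∫⁻ ω, ENNReal.ofReal (PiProd A 0 m ω i j) ^ ε ∂μ ≤ ENNReal.ofReal ((Meps ^ m) i j) := by
    intro m
    induction m with
    | zero =>
      intro i j
      have : (fun ω => ENNReal.ofReal (PiProd A 0 0 ω i j) ^ ε)
          = fun _ : Ω => ENNReal.ofReal ((1 : Matrix (Fin d) (Fin d) ℝ) i j) ^ ε := rfl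
      rw [this, lintegral_const, measure_univ, mul_one, pow_zero]
      rcases eq_or_ne i j with rfl | h
      · rw [Matrix.one_apply_eq]
        simp
      · rw [Matrix.one_apply_ne h]
        simp [ENNReal.zero_rpow_of_pos hε₀]
    | succ m ih =>
      intro i j
      have hAn : ∀ᵐ ω ∂μ, ∀ a b, 0 ≤ A (0 - (m : ℤ)) ω a b :=
        ae_all_iff.2 fun a => ae_all_iff.2 fun b => hA_nonneg _ a b
      have hPin := piProd_nonneg A hA_nonneg 0 m
      calc ∫⁻ ω, ENNReal.ofReal (PiProd A 0 (m + 1) ω i j) ^ ε ∂μ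
          ≤ ∫⁻ ω, ∑ l, ENNReal.ofReal (PiProd A 0 m ω i l) ^ ε
              * ENNReal.ofReal (A (0 - (m : ℤ)) ω l j) ^ ε ∂μ := by
            apply lintegral_mono_ae
            filter_upwards [hAn, hPin] with ω h2 h1
            have hPi : PiProd A 0 (m + 1) ω i j
                = ∑ l, PiProd A 0 m ω i l * A (0 - (m : ℤ)) ω l j := by
              simp only [PiProd, Matrix.mul_apply]
            rw [hPi,
              ENNReal.ofReal_sum_of_nonneg fun l _ => mul_nonneg (h1 i l) (h2 l j)]
            refine le_trans (rpow_sum_le_sum_rpow _ _ hε₀ hε₁) ?_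
            refine Finset.sum_le_sum fun l _ => ?_
            rw [ENNReal.ofReal_mul (h1 i l), ENNReal.mul_rpow_of_nonneg _ _ hε₀.le]
        _ = ∑ l, ∫⁻ ω, ENNReal.ofReal (PiProd A 0 m ω i l) ^ ε
              * ENNReal.ofReal (A (0 - (m : ℤ)) ω l j) ^ ε ∂μ :=
            lintegral_finset_sum _ fun l _ =>
              (hmeas 0 m i l).mul
                ((ENNReal.measurable_ofReal.comp (hiid.1 _ l j)).pow_const ε)
        _ ≤ ∑ l, ENNReal.ofReal ((Meps ^ m) i l) * ENNReal.ofReal (Meps l j) := by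
            refine Finset.sum_le_sum fun l _ => ?_
            have hind := indep_piProd_A A hiid ε m i l l j
            have hYm : Measurable fun ω => ENNReal.ofReal (A (0 - (m : ℤ)) ω l j) ^ ε :=
              (ENNReal.measurable_ofReal.comp (hiid.1 _ l j)).pow_const ε
            have hmul := lintegral_mul_eq_lintegral_mul_lintegral_of_indepFun
              (hmeas 0 m i l) hYm hind
            have hshow : ∫⁻ ω, ENNReal.ofReal (PiProd A 0 m ω i l) ^ ε
                * ENNReal.ofReal (A (0 - (m : ℤ)) ω l j) ^ ε ∂μ
                = (∫⁻ ω, ENNReal.ofReal (PiProd A 0 m ω i l) ^ ε ∂μ)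
                  * ∫⁻ ω, ENNReal.ofReal (A (0 - (m : ℤ)) ω l j) ^ ε ∂μ := hmul
            rw [hshow, hAfac (0 - (m : ℤ)) l j]
            exact mul_le_mul_left (ih i l) _
        _ = ENNReal.ofReal ((Meps ^ (m + 1)) i j) := by
            rw [pow_succ, Matrix.mul_apply,
              ENNReal.ofReal_sum_of_nonneg fun l _ =>
                mul_nonneg (hpow_nonneg m i l) (hMeps_nonneg l j)]
            exact Finset.sum_congr rfl fun l _ => (ENNReal.ofReal_mul (hpow_nonneg m i l)).symm
  -- assemble
  have hPin := piProd_nonneg A hA_nonneg 0 n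
  calc ∫⁻ ω, ENNReal.ofReal (entryNorm (PiProd A 0 n ω) ^ ε) ∂μ
      ≤ ∫⁻ ω, ∑ i, ∑ j, ENNReal.ofReal (PiProd A 0 n ω i j) ^ ε ∂μ := by
        apply lintegral_mono_ae
        filter_upwards [hPin] with ω h
        have hnn : 0 ≤ entryNorm (PiProd A 0 n ω) :=
          Finset.sum_nonneg fun i _ => Finset.sum_nonneg fun j _ => abs_nonneg _
        rw [← ENNReal.ofReal_rpow_of_nonneg hnn hε₀.le]
        have heq : ENNReal.ofReal (entryNorm (PiProd A 0 n ω))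
            = ∑ i, ∑ j, ENNReal.ofReal (PiProd A 0 n ω i j) := by
          unfold entryNorm
          rw [ENNReal.ofReal_sum_of_nonneg (f := fun i => ∑ j, |PiProd A 0 n ω i j|) fun i _ =>
            Finset.sum_nonneg fun j _ => abs_nonneg _]
          refine Finset.sum_congr rfl fun i _ => ?_
          rw [ENNReal.ofReal_sum_of_nonneg fun j _ => abs_nonneg _]
          exact Finset.sum_congr rfl fun j _ => by rw [abs_of_nonneg (h i j)]
        rw [heq]
        refine le_trans (rpow_sum_le_sum_rpow _ _ hε₀ hε₁) ?_
        exact Finset.sum_le_sum fun i _ => rpow_sum_le_sum_rpow _ _ hε₀ hε₁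
    _ = ∑ i, ∑ j, ∫⁻ ω, ENNReal.ofReal (PiProd A 0 n ω i j) ^ ε ∂μ := by
        rw [lintegral_finset_sum _ fun i _ =>
          Finset.measurable_sum _ fun j _ => hmeas 0 n i j]
        exact Finset.sum_congr rfl fun i _ => lintegral_finset_sum _ fun j _ => hmeas 0 n i j
    _ ≤ ∑ i, ∑ j, ENNReal.ofReal ((Meps ^ n) i j) :=
        Finset.sum_le_sum fun i _ => Finset.sum_le_sum fun j _ => key n i j
    _ = ENNReal.ofReal (entryNorm (Meps ^ n)) := by
        unfold entryNorm
        rw [ENNReal.ofReal_sum_of_nonneg (f := fun i => ∑ j, |(Meps ^ n) i j|) fun i _ =>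
          Finset.sum_nonneg fun j _ => abs_nonneg _]
        refine Finset.sum_congr rfl fun i _ => ?_
        rw [ENNReal.ofReal_sum_of_nonneg fun j _ => abs_nonneg _]
        exact Finset.sum_congr rfl fun j _ => by rw [abs_of_nonneg (hpow_nonneg n i j)]

end AuxStmt17

end TriSRE
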